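/- Let X be a compact Hausdorff space and let M be a self-conjugate function space on X. Then for every triple of distinct points x, x', z in the Choquet boundary Ch(M), there exists a function h ∈ M such that |h(x)| ≠ |h(x')| and h(z) = 0. -/

import Mathlib

/-- The evaluation functional at a point, as an element of the dual of a subspace of `C(X, ℂ)`. -/
noncomputable def evalDual {X : Type*} [TopologicalSpace X] [CompactSpace X]
    (S : Submodule ℂ C(X, ℂ)) (x : X) : StrongDual ℂ ↥S :=
  LinearMap.mkContinuous
    { toFun := fun f => (f : C(X, ℂ)) x
      map_add' := fun f g => rfl
      map_smul' := fun c f => rfl }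
    1
    (fun f => by
      exact le_of_le_of_eq (ContinuousMap.norm_coe_le_norm (f : C(X, ℂ)) x) (one_mul _).symm)

/-- The Choquet boundary of a subspace `S` of `C(X, ℂ)`: the set of points `x ∈ X` such that
the evaluation functional at `x` is an extreme point of the closed unit ball of the dual of `S`. -/
noncomputable def ChoquetBoundary {X : Type*} [TopologicalSpace X] [CompactSpace X]
    (S : Submodule ℂ C(X, ℂ)) : Set X :=
  {x | evalDual S x ∈ Set.extremePoints ℝ (Metric.closedBall (0 : StrongDual ℂ ↥S) 1)}

theorem step_one_separation
    {X : Type*} [TopologicalSpace X] [CompactSpace X] [T2Space X]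
    (M : Submodule ℂ C(X, ℂ))
    -- `M` is a self-conjugate function space
    (h1M : (1 : C(X, ℂ)) ∈ M)
    (hMsep : ∀ x x' : X, x ≠ x' → ∃ f ∈ M, f x ≠ f x')
    (hMconj : ∀ f ∈ M, star f ∈ M)
    -- three distinct points of the Choquet boundary of `M`
    (x x' z : X)
    (hx : x ∈ ChoquetBoundary M) (hx' : x' ∈ ChoquetBoundary M)
    (hz : z ∈ ChoquetBoundary M)
    (hxx' : x ≠ x') (hxz : x ≠ z) (hx'z : x' ≠ z) :
    ∃ h ∈ M, ‖h x‖ ≠ ‖h x'‖ ∧ h z = 0 := by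
  by_contra hcon
  push_neg at hcon
  -- Key consequence: for all f in M, |f x - f z| = |f x' - f z|
  have hkey : ∀ f : ↥M, ‖(f : C(X, ℂ)) x - (f : C(X, ℂ)) z‖
      = ‖(f : C(X, ℂ)) x' - (f : C(X, ℂ)) z‖ := by
    intro f
    set g : C(X, ℂ) := (f : C(X, ℂ)) - ((f : C(X, ℂ)) z) • 1 with hg
    have hgM : g ∈ M := M.sub_mem f.2 (M.smul_mem _ h1M)
    have hgz : g z = 0 := by simp [hg]
    by_contra hne
    exact hcon g hgM (by simpa [hg] using hne) hgz
  obtain ⟨f0c, hf0M, hf0⟩ := hMsep x z hxz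
  set f0 : ↥M := ⟨f0c, hf0M⟩ with hf0def
  set a : ℂ := (f0 : C(X, ℂ)) x - (f0 : C(X, ℂ)) z with ha
  have hane : a ≠ 0 := sub_ne_zero.mpr hf0
  set lam : ℂ := ((f0 : C(X, ℂ)) x' - (f0 : C(X, ℂ)) z) / a with hlam
  have habslam : ‖lam‖ = 1 := by
    rw [hlam, norm_div, ← hkey f0, ← ha, div_self]
    exact norm_ne_zero_iff.mpr hane
  have hlin : ∀ f : ↥M, (f : C(X, ℂ)) x' - (f : C(X, ℂ)) z
      = lam * ((f : C(X, ℂ)) x - (f : C(X, ℂ)) z) := by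
    intro f
    set c : ℂ := ((f : C(X, ℂ)) x - (f : C(X, ℂ)) z) / a with hc
    set g : ↥M := f - c • f0 with hgdef
    have hgx : (g : C(X, ℂ)) x - (g : C(X, ℂ)) z = 0 := by
      simp only [hgdef, Submodule.coe_sub, Submodule.coe_smul,
        ContinuousMap.sub_apply, ContinuousMap.smul_apply, smul_eq_mul]
      have hca : c * a = (f : C(X, ℂ)) x - (f : C(X, ℂ)) z := by rw [hc, div_mul_cancel₀ _ hane]
      linear_combination -hca + c * ha
    have h0 : (g : C(X, ℂ)) x' - (g : C(X, ℂ)) z = 0 := by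
      have h4 := hkey g
      rw [hgx] at h4
      simpa using h4.symm
    have hxp : (g : C(X, ℂ)) x' - (g : C(X, ℂ)) z
        = ((f : C(X, ℂ)) x' - (f : C(X, ℂ)) z)
          - c * ((f0 : C(X, ℂ)) x' - (f0 : C(X, ℂ)) z) := by
      simp only [hgdef, Submodule.coe_sub, Submodule.coe_smul,
        ContinuousMap.sub_apply, ContinuousMap.smul_apply, smul_eq_mul]
      ring
    rw [hxp] at h0
    have h5 : (f : C(X, ℂ)) x' - (f : C(X, ℂ)) z
        = c * ((f0 : C(X, ℂ)) x' - (f0 : C(X, ℂ)) z) := by linear_combination h0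
    rw [h5, hc, hlam]
    field_simp
  -- Self-conjugacy forces lam to be real
  have hlamreal : (starRingEnd ℂ) lam = lam := by
    set f0s : ↥M := ⟨star f0c, hMconj _ hf0M⟩ with hf0s
    have h1 := hlin f0s
    have h2 : (starRingEnd ℂ) ((f0 : C(X, ℂ)) x' - (f0 : C(X, ℂ)) z)
        = lam * (starRingEnd ℂ) a := by
      simpa [hf0s, ha, ContinuousMap.star_apply, map_sub] using h1
    have h3 : (f0 : C(X, ℂ)) x' - (f0 : C(X, ℂ)) z = lam * a := by
      rw [hlam, div_mul_cancel₀ _ hane]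
    rw [h3, map_mul] at h2
    have hane' : (starRingEnd ℂ) a ≠ 0 := by simpa using hane
    exact mul_right_cancel₀ hane' h2
  have hlampm : lam = 1 ∨ lam = -1 := by
    have him : lam.im = 0 := Complex.conj_eq_iff_im.mp hlamreal
    have hre : |lam.re| = 1 := by rw [Complex.abs_re_eq_norm.mpr him, habslam]
    rcases (abs_eq (by norm_num : (0:ℝ) ≤ 1)).mp hre with h1 | h1
    · left; exact Complex.ext h1 him
    · right; exact Complex.ext (by simpa using h1) (by simpa using him)
  rcases hlampm with hl1 | hl1
  · -- lam = 1 contradicts separation of x and x'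
    obtain ⟨gc, hgM, hg⟩ := hMsep x x' hxx'
    have := hlin ⟨gc, hgM⟩
    rw [hl1, one_mul] at this
    exact hg (by linear_combination -this)
  · -- lam = -1 : evalDual M z is the midpoint of evalDual M x and evalDual M x'
    have hmid : (1/2 : ℝ) • evalDual M x + (1/2 : ℝ) • evalDual M x' = evalDual M z := by
      apply ContinuousLinearMap.ext
      intro f
      have hf := hlin f
      rw [hl1] at hf
      have hfx : (evalDual M x) f = (f : C(X, ℂ)) x := rfl
      have hfx' : (evalDual M x') f = (f : C(X, ℂ)) x' := rfl
      have hfz : (evalDual M z) f = (f : C(X, ℂ)) z := rfl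
      simp only [ContinuousLinearMap.add_apply, ContinuousLinearMap.coe_smul',
        Pi.smul_apply, hfx, hfx', hfz, Complex.real_smul]
      push_cast
      linear_combination hf / 2
    have hball : ∀ w : X, evalDual M w ∈ Metric.closedBall (0 : StrongDual ℂ ↥M) 1 := by
      intro w
      rw [Metric.mem_closedBall]
      refine (dist_zero_right (evalDual M w)).le.trans ?_
      exact LinearMap.mkContinuous_norm_le _ zero_le_one _
    obtain ⟨-, hext⟩ := hz
    have hres := hext (hball x) (hball x')
      ⟨1/2, 1/2, by norm_num, by norm_num, by norm_num, hmid⟩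
    have hxeq : evalDual M x = evalDual M z := hres
    have : (evalDual M x) f0 = (evalDual M z) f0 := by rw [hxeq]
    exact hf0 this
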